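/- Let (T,[·,·,·],α) be a multiplicative Hom Lie triple system over a field k, V a k-vector space, A ∈ End(V), and θ : T×T → End(V) a bilinear map satisfying (R1), (R2) and (R3). Then E_V = T ⊕ V is a multiplicative Hom Lie triple system under the bracket [(a,u),(b,v),(c,w)]_V = ([a,b,c], θ(b,c)(u) − θ(a,c)(v) + D(a,b)(w)) and the twist map β(a,u) = (α(a),A(u)); moreover T ≅ T⊕0 is a Hom Lie triple subsystem, the bracket of three elements of E_V lies in V whenever one of them lies in V, and it vanishes whenever two of them lie in V. -/

import Mathlib

set_option maxHeartbeats 1000000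


/-- Let `(T, brT, α)` be a multiplicative Hom Lie triple system over a
field `K`, `V` a `K`-vector space, `A ∈ End(V)` and `θ : T×T → End(V)` a bilinear map
satisfying (R1), (R2), (R3) (with `D(a,b) = θ(b,a) − θ(a,b)`).  Then `E_V = T ⊕ V` is a
multiplicative Hom Lie triple system under
`[(a,u),(b,v),(c,w)] = ([a,b,c], θ(b,c)u − θ(a,c)v + D(a,b)w)` and the twist
`β(a,u) = (α a, A u)`; moreover `T ≅ T ⊕ 0` is a Hom Lts subsystem, the bracket lies in
`V` whenever one argument lies in `V`, and vanishes whenever two arguments lie in `V`. -/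
theorem stmt1 {K : Type*} [Field K] {T V : Type*}
    [AddCommGroup T] [Module K T] [AddCommGroup V] [Module K V]
    -- `T` is a multiplicative Hom Lie triple system
    (brT : T →ₗ[K] T →ₗ[K] T →ₗ[K] T) (α : T →ₗ[K] T)
    (hT1 : ∀ a c, brT a a c = 0)
    (hT2 : ∀ a b c, brT a b c + brT b c a + brT c a b = 0)
    (hT3 : ∀ a b c d e, brT (α a) (α b) (brT c d e) =
      brT (brT a b c) (α d) (α e) + brT (α c) (brT a b d) (α e) +
        brT (α c) (α d) (brT a b e))
    (hTmul : ∀ a b c, α (brT a b c) = brT (α a) (α b) (α c))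
    -- the representation data `(V, θ, A)`
    (A : V →ₗ[K] V) (θ : T →ₗ[K] T →ₗ[K] V →ₗ[K] V)
    (hR1 : ∀ a b v, θ (α a) (α b) (A v) = A (θ a b v))
    (hR2 : ∀ a b c d v,
      θ (α c) (α d) (θ a b v) - θ (α b) (α d) (θ a c v) -
          θ (α a) (brT b c d) (A v) +
        (θ (α c) (α b) (θ a d v) - θ (α b) (α c) (θ a d v)) = 0)
    (hR3 : ∀ a b c d v,
      θ (α c) (α d) (θ b a v - θ a b v) -
          (θ (α b) (α a) (θ c d v) - θ (α a) (α b) (θ c d v)) +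
        θ (brT a b c) (α d) (A v) + θ (α c) (brT a b d) (A v) = 0)
    -- the bracket and twist on `E_V = T ⊕ V`
    (brE : T × V → T × V → T × V → T × V)
    (hbrE : ∀ p q r, brE p q r =
      (brT p.1 q.1 r.1,
        θ q.1 r.1 p.2 - θ p.1 r.1 q.2 + (θ q.1 p.1 r.2 - θ p.1 q.1 r.2)))
    (β : T × V → T × V) (hβ : ∀ p, β p = (α p.1, A p.2)) :
    -- `E_V` is a multiplicative Hom Lie triple system
    (∀ q r, IsLinearMap K fun p => brE p q r) ∧
    (∀ p r, IsLinearMap K fun q => brE p q r) ∧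
    (∀ p q, IsLinearMap K fun r => brE p q r) ∧
    (∀ p q, brE p p q = 0) ∧
    (∀ p q r, brE p q r + brE q r p + brE r p q = 0) ∧
    (∀ p q r u w, brE (β p) (β q) (brE r u w) =
      brE (brE p q r) (β u) (β w) + brE (β r) (brE p q u) (β w) +
        brE (β r) (β u) (brE p q w)) ∧
    (∀ p q r, β (brE p q r) = brE (β p) (β q) (β r)) ∧
    -- `T ≅ T ⊕ 0` is a Hom Lie triple subsystem
    (∀ a b c : T, brE (a, (0 : V)) (b, 0) (c, 0) = (brT a b c, 0)) ∧
    (∀ a : T, β (a, (0 : V)) = (α a, 0)) ∧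
    -- the bracket lies in `V` whenever one argument lies in `V`
    (∀ p q r : T × V, (p.1 = 0 ∨ q.1 = 0 ∨ r.1 = 0) → (brE p q r).1 = 0) ∧
    -- and vanishes whenever two arguments lie in `V`
    (∀ p q r : T × V,
      ((p.1 = 0 ∧ q.1 = 0) ∨ (p.1 = 0 ∧ r.1 = 0) ∨ (q.1 = 0 ∧ r.1 = 0)) →
        brE p q r = 0) := by
  constructor
  · intro q r
    constructor
    · intro p p'
      simp only [hbrE, Prod.fst_add, Prod.snd_add, map_add, LinearMap.add_apply,
        Prod.mk_add_mk]
      exact Prod.ext (by abel) (by abel)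
    · intro c p
      simp only [hbrE, Prod.smul_fst, Prod.smul_snd, map_smul, LinearMap.smul_apply,
        Prod.smul_mk, smul_sub, smul_add]
  refine ⟨?_, ?_, ?_, ?_, ?_, ?_, ?_, ?_, ?_, ?_⟩
  · intro p r
    constructor
    · intro q q'
      simp only [hbrE, Prod.fst_add, Prod.snd_add, map_add, LinearMap.add_apply,
        Prod.mk_add_mk]
      exact Prod.ext (by abel) (by abel)
    · intro c q
      simp only [hbrE, Prod.smul_fst, Prod.smul_snd, map_smul, LinearMap.smul_apply,
        Prod.smul_mk, smul_sub, smul_add]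
  · intro p q
    constructor
    · intro r r'
      simp only [hbrE, Prod.fst_add, Prod.snd_add, map_add, LinearMap.add_apply,
        Prod.mk_add_mk]
      exact Prod.ext (by abel) (by abel)
    · intro c r
      simp only [hbrE, Prod.smul_fst, Prod.smul_snd, map_smul, LinearMap.smul_apply,
        Prod.smul_mk, smul_sub, smul_add]
  · intro p q
    rw [hbrE]
    exact Prod.ext (by simpa using hT1 p.1 q.1) (by simp)
  · intro p q r
    simp only [hbrE, Prod.mk_add_mk]
    refine Prod.ext (by simpa using hT2 p.1 q.1 r.1) ?_
    show _ = (0 : T × V).2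
    simp only [Prod.snd_zero]
    abel
  · intro p q r u w
    obtain ⟨a, u0⟩ := p; obtain ⟨b, v0⟩ := q; obtain ⟨c, w0⟩ := r
    obtain ⟨d, x0⟩ := u; obtain ⟨e, y0⟩ := w
    simp only [hbrE, hβ, map_add, map_sub, LinearMap.add_apply, LinearMap.sub_apply,
      Prod.mk_add_mk]
    refine Prod.ext (hT3 a b c d e) ?_
    have h1 := hR2 b c d e u0
    have h2 := hR2 a c d e v0
    have h3 := hR3 a b d e w0
    have h4 := hR3 a b c e x0
    have h5 := hR3 a b d c y0
    have h6 := hR3 a b c d y0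
    simp only [map_sub] at h3 h4 h5 h6
    show _ = _
    linear_combination (norm := module) -h1 + h2 - h3 + h4 - h5 + h6
  · intro p q r
    simp only [hbrE, hβ, map_sub, map_add, hTmul, hR1]
  · intro a b c
    rw [hbrE]
    refine Prod.ext rfl ?_
    show _ - _ + _ = (0 : V)
    simp
  · intro a
    simp [hβ]
  · intro p q r h
    rcases h with h | h | h <;> rw [hbrE] <;> simp [h]
  · intro p q r h
    rcases h with ⟨h1, h2⟩ | ⟨h1, h2⟩ | ⟨h1, h2⟩ <;> rw [hbrE] <;>
      refine Prod.ext (by simp [h1, h2]) ?_ <;>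
      show _ - _ + _ = (0 : T × V).2 <;> simp [h1, h2]
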